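/- Let s ≥ 1 and p ≥ 2. Suppose A ∈ ℝ^{s×s} and b ∈ ℝ^s satisfy the tall-tree order conditions of order p, i.e. bᵀ A^{j-1} e = 1/j! for all 1 ≤ j ≤ p, where e = (1,…,1)ᵀ ∈ ℝ^s. Let R ∈ ℝ^{s×s} be symmetric with R e = b, set X := R A + Aᵀ R − b bᵀ, and let M be a real matrix with s rows whose column space equals the span of the Krylov vectors {e, A e, A² e, …, A^{s-1} e}. If Mᵀ X M is positive semidefinite, then Mᵀ X A^{j-1} e = 0 for every 1 ≤ j ≤ ⌊p/2⌋. -/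

import Mathlib

open Matrix

private lemma aux_quad (a c : ℝ) (ha : 0 ≤ a) (h : ∀ t : ℝ, 0 ≤ a * t ^ 2 + 2 * c * t) :
    c = 0 := by
  have h1 := h (-c / (a + 1))
  have ha1 : (0:ℝ) < a + 1 := by linarith
  have h2 : 0 ≤ (a * (-c / (a + 1)) ^ 2 + 2 * c * (-c / (a + 1))) * (a + 1) ^ 2 :=
    mul_nonneg h1 (by positivity)
  have h3 : (a * (-c / (a + 1)) ^ 2 + 2 * c * (-c / (a + 1))) * (a + 1) ^ 2
      = a * c ^ 2 - 2 * c ^ 2 * (a + 1) := by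
    field_simp
    ring
  rw [h3] at h2
  nlinarith [sq_nonneg c]

private lemma krylov_mem {s : ℕ} (A : Matrix (Fin s) (Fin s) ℝ) (e : Fin s → ℝ) (k : ℕ) :
    (A ^ k) *ᵥ e ∈ Submodule.span ℝ (Set.range fun j : Fin s => (A ^ (j : ℕ)) *ᵥ e) := by
  induction k using Nat.strong_induction_on with
  | _ k ih =>
    by_cases hk : k < s
    · exact Submodule.subset_span ⟨⟨k, hk⟩, rfl⟩
    · push_neg at hk
      rcases Nat.eq_zero_or_pos s with hs0 | hs1
      · subst hs0
        have h0 : (A ^ k) *ᵥ e = 0 := funext fun i => i.elim0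
        rw [h0]; exact Submodule.zero_mem _
      have hchar := Matrix.aeval_self_charpoly A
      rw [Polynomial.aeval_eq_sum_range] at hchar
      have hdeg : A.charpoly.natDegree = s := by
        simpa using A.charpoly_natDegree_eq_dim
      rw [hdeg, Finset.sum_range_succ] at hchar
      have hlead : A.charpoly.coeff s = 1 := by
        have hm := A.charpoly_monic
        rw [Polynomial.Monic, Polynomial.leadingCoeff, hdeg] at hm
        exact hm
      rw [hlead, one_smul] at hchar
      have hAsm : (A ^ s : Matrix (Fin s) (Fin s) ℝ)
          = ∑ i ∈ Finset.range s, -(A.charpoly.coeff i • A ^ i) := by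
        rw [Finset.sum_neg_distrib]
        exact eq_neg_of_add_eq_zero_left (by rw [add_comm]; exact hchar)
      have hAs : (A ^ s) *ᵥ e
          = ∑ i ∈ Finset.range s, (-(A.charpoly.coeff i)) • ((A ^ i) *ᵥ e) := by
        rw [hAsm]
        rw [show (∑ i ∈ Finset.range s, -(A.charpoly.coeff i • A ^ i)) *ᵥ e
            = Matrix.mulVec.addMonoidHomLeft e
              (∑ i ∈ Finset.range s, -(A.charpoly.coeff i • A ^ i)) from rfl]
        rw [map_sum]
        refine Finset.sum_congr rfl fun i _ => ?_
        show (-(A.charpoly.coeff i • A ^ i)) *ᵥ e = _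
        rw [Matrix.neg_mulVec, Matrix.smul_mulVec, neg_smul]
      have hksplit : A ^ k = A ^ (k - s) * A ^ s := by
        rw [← pow_add]; congr 1; omega
      rw [hksplit, ← Matrix.mulVec_mulVec, hAs, ← Matrix.mulVecLin_apply, map_sum]
      refine Submodule.sum_mem _ fun i hi => ?_
      rw [LinearMap.map_smul, Matrix.mulVecLin_apply, Matrix.mulVec_mulVec, ← pow_add]
      refine Submodule.smul_mem _ _ (ih (k - s + i) ?_)
      have := Finset.mem_range.mp hi
      omega

private lemma alt_sum_choose (m : ℕ) :
    ∑ i ∈ Finset.range (m + 1), (-1:ℝ) ^ i * ((m + 2).choose (i + 1) : ℝ)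
      = 1 + (-1) ^ m := by
  have h := Int.alternating_sum_range_choose (n := m + 2)
  rw [if_neg (by omega)] at h
  rw [Finset.sum_range_succ, Finset.sum_range_succ'] at h
  have hneg : ∑ i ∈ Finset.range (m + 1), (-1:ℤ) ^ (i + 1) * ((m + 2).choose (i + 1) : ℤ)
      = -∑ i ∈ Finset.range (m + 1), (-1:ℤ) ^ i * ((m + 2).choose (i + 1) : ℤ) := by
    rw [← Finset.sum_neg_distrib]
    exact Finset.sum_congr rfl fun i _ => by ring
  rw [hneg] at h
  simp only [pow_zero, one_mul, Nat.choose_zero_right, Nat.choose_self, Nat.cast_one,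
    mul_one] at h
  have hm2 : (-1:ℤ) ^ (m + 2) = (-1) ^ m := by
    rw [pow_add]; norm_num
  rw [hm2] at h
  have hZ : ∑ i ∈ Finset.range (m + 1), (-1:ℤ) ^ i * ((m + 2).choose (i + 1) : ℤ)
      = 1 + (-1) ^ m := by linarith
  exact_mod_cast hZ

theorem nullvec_lemma_degenerate {s : ℕ} (hs : 1 ≤ s) {p : ℕ} (hp : 2 ≤ p)
    (A : Matrix (Fin s) (Fin s) ℝ) (b : Fin s → ℝ)
    (e : Fin s → ℝ) (he : e = fun _ => 1)
    (horder : ∀ j : ℕ, 1 ≤ j → j ≤ p →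
      b ⬝ᵥ (A ^ (j - 1)).mulVec e = 1 / (Nat.factorial j : ℝ))
    (R : Matrix (Fin s) (Fin s) ℝ) (hRsymm : R.IsSymm)
    (hRe : R.mulVec e = b)
    (X : Matrix (Fin s) (Fin s) ℝ)
    (hX : X = R * A + Aᵀ * R - vecMulVec b b)
    {t : ℕ} (M : Matrix (Fin s) (Fin t) ℝ)
    (hM : Submodule.span ℝ (Set.range Mᵀ) =
      Submodule.span ℝ (Set.range fun j : Fin s => (A ^ (j : ℕ)).mulVec e))
    (hXpsd : (Mᵀ * X * M).PosSemidef) :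
    ∀ j : ℕ, 1 ≤ j → j ≤ p / 2 → (Mᵀ * X).mulVec ((A ^ (j - 1)).mulVec e) = 0 := by
  set V : Submodule ℝ (Fin s → ℝ) := Submodule.span ℝ (Set.range Mᵀ) with hV
  have hmemV : ∀ k : ℕ, (A ^ k) *ᵥ e ∈ V := by
    intro k; rw [hM]; exact krylov_mem A e k
  -- X is symmetric
  have hbbT : (vecMulVec b b)ᵀ = vecMulVec b b := by
    ext i j; simp [Matrix.vecMulVec_apply, Matrix.transpose_apply, mul_comm]
  have hXsymm : Xᵀ = X := by
    rw [hX, Matrix.transpose_sub, Matrix.transpose_add, Matrix.transpose_mul,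
      Matrix.transpose_mul, Matrix.transpose_transpose, hbbT, hRsymm.eq]
    abel
  have hBsymm : ∀ x y : Fin s → ℝ, x ⬝ᵥ X *ᵥ y = y ⬝ᵥ X *ᵥ x := by
    intro x y
    rw [Matrix.dotProduct_mulVec]
    rw [show x ᵥ* X = X *ᵥ x from by
      conv_lhs => rw [← hXsymm]
      rw [Matrix.vecMul_transpose]]
    rw [dotProduct_comm]
  have hRdot : ∀ x y : Fin s → ℝ, x ⬝ᵥ R *ᵥ y = y ⬝ᵥ R *ᵥ x := by
    intro x y
    rw [Matrix.dotProduct_mulVec]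
    rw [show x ᵥ* R = R *ᵥ x from by
      conv_lhs => rw [← hRsymm.eq]
      rw [Matrix.vecMul_transpose]]
    rw [dotProduct_comm]
  have hRe' : ∀ w : Fin s → ℝ, e ⬝ᵥ R *ᵥ w = b ⬝ᵥ w := by
    intro w
    rw [Matrix.dotProduct_mulVec]
    rw [show e ᵥ* R = b from by
      conv_lhs => rw [← hRsymm.eq]
      rw [Matrix.vecMul_transpose, hRe]]
  -- positivity on V
  have hposV : ∀ w ∈ V, 0 ≤ w ⬝ᵥ X *ᵥ w := by
    intro w hw
    rw [hV, show Set.range Mᵀ = Set.range M.col from rfl, ← Matrix.range_mulVecLin] at hw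
    obtain ⟨c, rfl⟩ := hw
    have h2 := hXpsd.dotProduct_mulVec_nonneg c
    simp only [star_trivial] at h2
    rw [← Matrix.mulVec_mulVec, ← Matrix.mulVec_mulVec, Matrix.dotProduct_mulVec,
      Matrix.vecMul_transpose] at h2
    simpa [Matrix.mulVecLin_apply] using h2
  -- null vectors of the restricted form
  have hnull : ∀ w ∈ V, w ⬝ᵥ X *ᵥ w = 0 → ∀ u ∈ V, w ⬝ᵥ X *ᵥ u = 0 := by
    intro w hw hw0 u hu
    refine aux_quad (u ⬝ᵥ X *ᵥ u) (w ⬝ᵥ X *ᵥ u) (hposV u hu) fun r => ?_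
    have hmem : w + r • u ∈ V := V.add_mem hw (V.smul_mem r hu)
    have hexp : (w + r • u) ⬝ᵥ X *ᵥ (w + r • u)
        = w ⬝ᵥ X *ᵥ w + r * (w ⬝ᵥ X *ᵥ u) + r * (u ⬝ᵥ X *ᵥ w) + r * r * (u ⬝ᵥ X *ᵥ u) := by
      rw [Matrix.mulVec_add, Matrix.mulVec_smul]
      simp only [dotProduct_add, add_dotProduct, smul_dotProduct, dotProduct_smul,
        smul_eq_mul]
      ring
    have h0 := hposV _ hmem
    rw [hexp, hw0, hBsymm u w] at h0
    nlinarith [h0]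
  -- order conditions reindexed
  have hβ : ∀ i : ℕ, i + 1 ≤ p → b ⬝ᵥ (A ^ i) *ᵥ e = 1 / ((i + 1).factorial : ℝ) := by
    intro i hi
    have := horder (i + 1) (by omega) hi
    simpa using this
  -- bilinear expansion
  have hpow : ∀ j : ℕ, A *ᵥ ((A ^ j) *ᵥ e) = (A ^ (j + 1)) *ᵥ e := by
    intro j; rw [Matrix.mulVec_mulVec, ← pow_succ']
  have hbb : ∀ w : Fin s → ℝ, vecMulVec b b *ᵥ w = (b ⬝ᵥ w) • b := by
    intro w
    ext i
    simp only [Matrix.mulVec, Matrix.vecMulVec_apply, dotProduct, Pi.smul_apply,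
      smul_eq_mul, Finset.sum_mul]
    exact Finset.sum_congr rfl fun j _ => by ring
  have hd : ∀ i j : ℕ, ((A ^ i) *ᵥ e) ⬝ᵥ X *ᵥ ((A ^ j) *ᵥ e)
      = ((A ^ i) *ᵥ e) ⬝ᵥ R *ᵥ ((A ^ (j + 1)) *ᵥ e)
        + ((A ^ (i + 1)) *ᵥ e) ⬝ᵥ R *ᵥ ((A ^ j) *ᵥ e)
        - (b ⬝ᵥ (A ^ i) *ᵥ e) * (b ⬝ᵥ (A ^ j) *ᵥ e) := by
    intro i j
    rw [hX, Matrix.sub_mulVec, Matrix.add_mulVec, dotProduct_sub, dotProduct_add]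
    rw [← Matrix.mulVec_mulVec ((A ^ j) *ᵥ e) R A, hpow j]
    rw [← Matrix.mulVec_mulVec ((A ^ j) *ᵥ e) Aᵀ R,
      Matrix.dotProduct_mulVec ((A ^ i) *ᵥ e) Aᵀ, Matrix.vecMul_transpose, hpow i]
    rw [hbb, dotProduct_smul, smul_eq_mul, dotProduct_comm ((A ^ i) *ᵥ e) b]
    rw [Matrix.dotProduct_mulVec ((A ^ (i+1)) *ᵥ e) R]
    ring
  -- the telescoping identity
  have hE : ∀ m : ℕ, m + 2 ≤ p →
      ∑ i ∈ Finset.range (m + 1),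
        (-1:ℝ) ^ i * (((A ^ i) *ᵥ e) ⬝ᵥ X *ᵥ ((A ^ (m - i)) *ᵥ e)) = 0 := by
    intro m hm
    set f : ℕ → ℝ := fun k => (-1:ℝ) ^ k * (((A ^ k) *ᵥ e) ⬝ᵥ R *ᵥ ((A ^ (m + 1 - k)) *ᵥ e))
      with hf
    have hterm : ∀ i ∈ Finset.range (m + 1),
        (-1:ℝ) ^ i * (((A ^ i) *ᵥ e) ⬝ᵥ X *ᵥ ((A ^ (m - i)) *ᵥ e))
          = (f i - f (i + 1))
            - (-1:ℝ) ^ i * (((m + 2).choose (i + 1) : ℝ) / ((m + 2).factorial : ℝ)) := by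
      intro i hi
      have hi' : i ≤ m := Finset.mem_range_succ_iff.mp hi
      have hβi := hβ i (by omega)
      have hβmi := hβ (m - i) (by omega)
      rw [hd i (m - i), hβi, hβmi]
      simp only [hf]
      rw [show m + 1 - i = m - i + 1 from by omega, show m + 1 - (i + 1) = m - i from by omega]
      have hfac : ((m + 2).choose (i + 1) : ℝ) * ((i + 1).factorial : ℝ)
          * ((m - i + 1).factorial : ℝ) = ((m + 2).factorial : ℝ) := by
        have h := Nat.choose_mul_factorial_mul_factorial (show i + 1 ≤ m + 2 by omega)
        rw [show m + 2 - (i + 1) = m - i + 1 from by omega] at h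
        exact_mod_cast h
      have hne1 : ((i + 1).factorial : ℝ) ≠ 0 := by positivity
      have hne2 : ((m - i + 1).factorial : ℝ) ≠ 0 := by positivity
      have hne3 : ((m + 2).factorial : ℝ) ≠ 0 := by positivity
      have hval : (1:ℝ) / ((i + 1).factorial : ℝ) * ((1:ℝ) / ((m - i + 1).factorial : ℝ))
          = ((m + 2).choose (i + 1) : ℝ) / ((m + 2).factorial : ℝ) := by
        rw [div_mul_div_comm, one_mul, div_eq_div_iff (by positivity) hne3]
        linarith [hfac]
      rw [hval]
      ring
    rw [Finset.sum_congr rfl hterm, Finset.sum_sub_distrib, Finset.sum_range_sub' f]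
    have hsum2 : ∑ i ∈ Finset.range (m + 1),
        (-1:ℝ) ^ i * (((m + 2).choose (i + 1) : ℝ) / ((m + 2).factorial : ℝ))
          = (1 + (-1:ℝ) ^ m) / ((m + 2).factorial : ℝ) := by
      rw [← alt_sum_choose m, Finset.sum_div]
      exact Finset.sum_congr rfl fun i _ => by ring
    rw [hsum2]
    have hf0 : f 0 = 1 / ((m + 2).factorial : ℝ) := by
      simp only [hf]
      rw [Nat.sub_zero, pow_zero A, Matrix.one_mulVec, hRe', hβ (m + 1) hm]
      norm_num
    have hfm : f (m + 1) = (-1:ℝ) ^ (m + 1) * (1 / ((m + 2).factorial : ℝ)) := by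
      simp only [hf]
      rw [Nat.sub_self, pow_zero A, Matrix.one_mulVec, hRdot, hRe', hβ (m + 1) hm]
    rw [hf0, hfm, pow_succ]
    ring
  -- main induction
  have hS : ∀ k : ℕ, 2 * k + 2 ≤ p → ∀ u ∈ V, ((A ^ k) *ᵥ e) ⬝ᵥ X *ᵥ u = 0 := by
    intro k
    induction k using Nat.strong_induction_on with
    | _ k ih =>
      intro hk
      have hdiag : ((A ^ k) *ᵥ e) ⬝ᵥ X *ᵥ ((A ^ k) *ᵥ e) = 0 := by
        have hEk := hE (2 * k) (by omega)
        have hzero : ∀ i ∈ Finset.range (2 * k + 1), i ≠ k →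
            (-1:ℝ) ^ i * (((A ^ i) *ᵥ e) ⬝ᵥ X *ᵥ ((A ^ (2 * k - i)) *ᵥ e)) = 0 := by
          intro i hi hne
          have hi' : i ≤ 2 * k := Finset.mem_range_succ_iff.mp hi
          rcases lt_or_gt_of_ne hne with h1 | h1
          · rw [ih i h1 (by omega) _ (hmemV _)]; ring
          · rw [hBsymm, ih (2 * k - i) (by omega) (by omega) _ (hmemV _)]; ring
        rw [Finset.sum_eq_single_of_mem k (Finset.mem_range.mpr (by omega)) hzero] at hEk
        rw [show 2 * k - k = k from by omega] at hEk
        rcases mul_eq_zero.mp hEk with h | h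
        · exact absurd h (pow_ne_zero k (by norm_num))
        · exact h
      exact hnull _ (hmemV k) hdiag
  -- conclusion
  intro j hj1 hj2
  have h2j : 2 * (j - 1) + 2 ≤ p := by
    have := (Nat.le_div_iff_mul_le (by norm_num : 0 < 2)).mp hj2
    omega
  funext i
  rw [← Matrix.mulVec_mulVec]
  show Mᵀ i ⬝ᵥ X *ᵥ ((A ^ (j - 1)) *ᵥ e) = (0 : Fin t → ℝ) i
  rw [hBsymm, hS (j - 1) h2j (Mᵀ i) (Submodule.subset_span ⟨i, rfl⟩)]
  rfl
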